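/- arXiv:1909.05895 — 2 statements merged into one kernel-verified Lean document; each statement's English description precedes it below -/
import Mathlib

section
/- Let H₁ ⊆ H₂ be finite Heisenberg p-groups with common center Z (so each Hᵢ is a p-group with center Z, Hᵢ/Z elementary abelian, and commutator pairing inducing a nondegenerate alternating form on Hᵢ/Z). Let φ be a nontrivial character of Z, and let η₁, η₂ be irreducible complex representations of H₁, H₂ respectively, both with central character φ. Then the restriction of η₂ to H₁ is isomorphic to the direct sum of [H₂:H₁]^{1/2} copies of η₁. -/
/-- A representation is irreducible: nonzero, and every invariant submodule is `⊥` or `⊤`. -/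
def IrreducibleRep {H : Type*} [Group H] {V : Type*} [AddCommGroup V] [Module ℂ V]
    (ρ : Representation ℂ H V) : Prop :=
  (⊥ : Submodule ℂ V) ≠ ⊤ ∧
    ∀ p : Submodule ℂ V, (∀ h : H, ∀ v ∈ p, ρ h v ∈ p) → p = ⊥ ∨ p = ⊤

open scoped commutatorElement

open LinearMap Module

section General
variable {G : Type*} [Group G]

private lemma irr_nontrivial {V : Type*} [AddCommGroup V] [Module ℂ V]
    (h : (⊥ : Submodule ℂ V) ≠ ⊤) : Nontrivial V := by
  by_contra hn
  rw [not_nontrivial_iff_subsingleton] at hn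
  exact h (Subsingleton.elim _ _)

/-- Schur: an endomorphism commuting with an irreducible representation is scalar. -/
private lemma schur_commute {V : Type*} [AddCommGroup V] [Module ℂ V]
    [FiniteDimensional ℂ V] {ρ : Representation ℂ G V}
    (h1 : (⊥ : Submodule ℂ V) ≠ ⊤)
    (h2 : ∀ p : Submodule ℂ V, (∀ g : G, ∀ v ∈ p, ρ g v ∈ p) → p = ⊥ ∨ p = ⊤)
    (f : Module.End ℂ V) (hf : ∀ g : G, ρ g * f = f * ρ g) :
    ∃ c : ℂ, f = c • (1 : Module.End ℂ V) := by
  haveI : Nontrivial V := irr_nontrivial h1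
  obtain ⟨c, hc⟩ := Module.End.exists_eigenvalue f
  refine ⟨c, ?_⟩
  obtain ⟨v, hv⟩ := hc.exists_hasEigenvector
  have hinv : ∀ g : G, ∀ x ∈ LinearMap.ker (f - c • 1), ρ g x ∈ LinearMap.ker (f - c • 1) := by
    intro g x hx
    rw [LinearMap.mem_ker] at hx ⊢
    have hx' : f x = c • x := by
      have := sub_eq_zero.mp hx
      simpa using this
    have hcom : f (ρ g x) = ρ g (f x) := by
      have := congrArg (fun (u : Module.End ℂ V) => u x) (hf g)
      simpa [Module.End.mul_apply] using this.symm
    simp [LinearMap.sub_apply, hcom, hx', map_smul, sub_eq_zero]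
  have hker : LinearMap.ker (f - c • 1) = ⊤ := by
    rcases h2 (LinearMap.ker (f - c • 1)) hinv with h | h
    · exfalso
      have : v ∈ LinearMap.ker (f - c • 1) := by
        simp [LinearMap.mem_ker, hv.apply_eq_smul, sub_eq_zero]
      rw [h, Submodule.mem_bot] at this
      exact hv.2 this
    · exact h
  ext x
  have : x ∈ LinearMap.ker (f - c • 1) := hker ▸ Submodule.mem_top
  have := sub_eq_zero.mp (LinearMap.mem_ker.mp this)
  simpa using this
end General

section Two
variable {G : Type*} [Group G] {X Y : Type*} [AddCommGroup X] [Module ℂ X]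
  [AddCommGroup Y] [Module ℂ Y]

/-- A nonzero equivariant map between irreducible representations is an isomorphism. -/
private lemma equiv_of_ne_zero (σ : Representation ℂ G X) (τ : Representation ℂ G Y)
    (hσ : IrreducibleRep σ) (hτ : IrreducibleRep τ) (f : X →ₗ[ℂ] Y)
    (hfe : ∀ g x, f (σ g x) = τ g (f x)) (hf : f ≠ 0) :
    ∃ e : X ≃ₗ[ℂ] Y, ∀ g x, e (σ g x) = τ g (e x) := by
  have hik : ∀ g : G, ∀ x ∈ LinearMap.ker f, σ g x ∈ LinearMap.ker f := by
    intro g x hx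
    rw [LinearMap.mem_ker] at hx ⊢
    rw [hfe, hx, map_zero]
  have hker : LinearMap.ker f = ⊥ := by
    rcases hσ.2 (LinearMap.ker f) hik with h | h
    · exact h
    · exfalso
      apply hf
      ext x
      have : x ∈ LinearMap.ker f := h ▸ Submodule.mem_top
      simpa using this
  have hir : ∀ g : G, ∀ y ∈ LinearMap.range f, τ g y ∈ LinearMap.range f := by
    rintro g y ⟨x, rfl⟩
    exact ⟨σ g x, hfe g x⟩
  have hrange : LinearMap.range f = ⊤ := by
    rcases hτ.2 (LinearMap.range f) hir with h | h
    · exfalso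
      apply hf
      ext x
      have : f x ∈ LinearMap.range f := LinearMap.mem_range_self f x
      rw [h, Submodule.mem_bot] at this
      simpa using this
    · exact h
  refine ⟨LinearEquiv.ofBijective f ⟨LinearMap.ker_eq_bot.mp hker,
    LinearMap.range_eq_top.mp hrange⟩, ?_⟩
  intro g x
  exact hfe g x

variable [Fintype G]

/-- The averaged map is equivariant. -/
private lemma avg_equivariant (σ : Representation ℂ G X) (τ : Representation ℂ G Y)
    (f : X →ₗ[ℂ] Y) (g : G) (x : X) :
    (∑ u : G, (τ u) ∘ₗ f ∘ₗ (σ u⁻¹)) (σ g x) = τ g ((∑ u : G, (τ u) ∘ₗ f ∘ₗ (σ u⁻¹)) x) := by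
  rw [LinearMap.sum_apply, LinearMap.sum_apply, map_sum]
  refine (Fintype.sum_bijective (g * ·) (Group.mulLeft_bijective g) _ _ (fun u => ?_)).symm
  simp only [LinearMap.comp_apply]
  have h1 : σ (g*u)⁻¹ (σ g x) = σ u⁻¹ x := by
    rw [← Module.End.mul_apply, ← map_mul]
    congr 1
    group
  have h2 : τ g (τ u (f (σ u⁻¹ x))) = τ (g*u) (f (σ u⁻¹ x)) := by
    rw [← Module.End.mul_apply, ← map_mul]
  rw [h2, h1]

private lemma mul_std_mul {m n : Type*} [Fintype m] [Fintype n] [DecidableEq m] [DecidableEq n]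
    (B : Matrix m m ℂ) (C : Matrix n n ℂ) (i k : m) (j l : n) :
    (B * Matrix.single i j (1:ℂ) * C) k l = B k i * C j l := by
  simp [Matrix.mul_apply, Matrix.single, ite_and, Finset.sum_ite_eq, Finset.mul_sum,
    Finset.sum_ite_eq']

private lemma avg_end_eq_smul {X : Type*} [AddCommGroup X] [Module ℂ X] [FiniteDimensional ℂ X]
    (σ : Representation ℂ G X) (hσ : IrreducibleRep σ) (f : Module.End ℂ X) :
    ∑ u : G, σ u * f * σ u⁻¹ =
      (((Fintype.card G : ℂ) * trace ℂ X f) / (finrank ℂ X : ℂ)) • 1 := by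
  haveI : Nontrivial X := irr_nontrivial hσ.1
  set T := ∑ u : G, σ u * f * σ u⁻¹ with hT
  have hcomm : ∀ g : G, σ g * T = T * σ g := by
    intro g
    ext x
    have := avg_equivariant σ σ f g x
    simpa [hT, Module.End.mul_apply, LinearMap.sum_apply, LinearMap.comp_apply] using this.symm
  obtain ⟨c, hc⟩ := schur_commute hσ.1 hσ.2 T hcomm
  have htr1 : ∀ u : G, trace ℂ X (σ u * f * σ u⁻¹) = trace ℂ X f := by
    intro u
    rw [LinearMap.trace_mul_comm, ← mul_assoc, ← map_mul]
    simp
  have htr : trace ℂ X T = (Fintype.card G : ℂ) * trace ℂ X f := by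
    rw [hT, map_sum]
    simp [htr1, Finset.sum_const, Finset.card_univ, nsmul_eq_mul]
  have hd : (finrank ℂ X : ℂ) ≠ 0 := Nat.cast_ne_zero.mpr finrank_pos.ne'
  have hctr : trace ℂ X T = c * (finrank ℂ X : ℂ) := by
    rw [hc, map_smul, trace_one]
    simp [smul_eq_mul]
  have hcval : c = ((Fintype.card G : ℂ) * trace ℂ X f) / (finrank ℂ X : ℂ) := by
    rw [eq_div_iff hd, ← hctr, htr]
  rw [hc, hcval]

private lemma sum_trace_eq_card {X : Type*} [AddCommGroup X] [Module ℂ X] [FiniteDimensional ℂ X]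
    (σ : Representation ℂ G X) (hσ : IrreducibleRep σ) :
    ∑ u : G, trace ℂ X (σ u) * trace ℂ X (σ u⁻¹) = (Fintype.card G : ℂ) := by
  classical
  haveI : Nontrivial X := irr_nontrivial hσ.1
  set d := finrank ℂ X with hdd
  have hd0 : (d : ℂ) ≠ 0 := Nat.cast_ne_zero.mpr finrank_pos.ne'
  set b := Module.finBasis ℂ X with hb
  set M : G → Matrix (Fin d) (Fin d) ℂ := fun u => LinearMap.toMatrix b b (σ u) with hM
  have hΦ : ∀ F : Matrix (Fin d) (Fin d) ℂ,
      ∑ u : G, M u * F * M u⁻¹ = (((Fintype.card G : ℂ) * Matrix.trace F) / (d:ℂ)) • 1 := by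
    intro F
    have h0 := congrArg (LinearMap.toMatrix b b) (avg_end_eq_smul σ hσ ((LinearMap.toMatrix b b).symm F))
    rw [map_sum] at h0
    have htrF : trace ℂ X ((LinearMap.toMatrix b b).symm F) = Matrix.trace F := by
      rw [trace_eq_matrix_trace ℂ b, LinearEquiv.apply_symm_apply]
    simp only [map_smul, htrF] at h0
    convert h0 using 2 with u
    · simp [hM, LinearMap.toMatrix_mul, LinearEquiv.apply_symm_apply, mul_assoc]
    · simp [LinearMap.toMatrix_one]
  have hterm : ∀ u : G, trace ℂ X (σ u) * trace ℂ X (σ u⁻¹)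
      = ∑ i : Fin d, ∑ j : Fin d, (M u) i i * (M u⁻¹) j j := by
    intro u
    rw [trace_eq_matrix_trace ℂ b, trace_eq_matrix_trace ℂ b, Matrix.trace, Matrix.trace,
      Finset.sum_mul_sum]
    rfl
  calc ∑ u : G, trace ℂ X (σ u) * trace ℂ X (σ u⁻¹)
      = ∑ u : G, ∑ i : Fin d, ∑ j : Fin d, (M u) i i * (M u⁻¹) j j := by
        exact Finset.sum_congr rfl fun u _ => hterm u
    _ = ∑ i : Fin d, ∑ j : Fin d, ∑ u : G, (M u) i i * (M u⁻¹) j j := by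
        rw [Finset.sum_comm]
        exact Finset.sum_congr rfl fun i _ => Finset.sum_comm
    _ = ∑ i : Fin d, ∑ j : Fin d, ((((Fintype.card G : ℂ) *
          Matrix.trace (Matrix.single i j (1:ℂ))) / (d:ℂ)) • (1 : Matrix (Fin d) (Fin d) ℂ)) i j := by
        refine Finset.sum_congr rfl fun i _ => Finset.sum_congr rfl fun j _ => ?_
        rw [← hΦ (Matrix.single i j (1:ℂ)), Matrix.sum_apply]
        exact Finset.sum_congr rfl fun u _ => (mul_std_mul (M u) (M u⁻¹) i i j j).symm
    _ = ∑ i : Fin d, ∑ j : Fin d, (if i = j then (Fintype.card G : ℂ)/(d:ℂ) else 0) := by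
        refine Finset.sum_congr rfl fun i _ => Finset.sum_congr rfl fun j _ => ?_
        by_cases h : i = j
        · subst h
          simp [Matrix.smul_apply, Matrix.one_apply, Matrix.trace_single_eq_same]
        · simp [Matrix.smul_apply, Matrix.one_apply, h, Matrix.trace_single_eq_of_ne (h := h)]
    _ = (Fintype.card G : ℂ) := by
        simp only [Finset.sum_ite_eq, Finset.mem_univ, if_true]
        rw [Finset.sum_const, Finset.card_univ, Fintype.card_fin, nsmul_eq_mul]
        field_simp

private lemma exists_equivariant_of_sum_ne_zero {X Y : Type*} [AddCommGroup X] [Module ℂ X]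
    [FiniteDimensional ℂ X] [AddCommGroup Y] [Module ℂ Y] [FiniteDimensional ℂ Y]
    (σ : Representation ℂ G X) (τ : Representation ℂ G Y)
    (hsum : ∑ u : G, trace ℂ Y (τ u) * trace ℂ X (σ u⁻¹) ≠ 0) :
    ∃ f : X →ₗ[ℂ] Y, (∀ g x, f (σ g x) = τ g (f x)) ∧ f ≠ 0 := by
  classical
  set dX := finrank ℂ X with hdX
  set dY := finrank ℂ Y with hdY
  set bX := Module.finBasis ℂ X with hbX
  set bY := Module.finBasis ℂ Y with hbY
  set MX : G → Matrix (Fin dX) (Fin dX) ℂ := fun u => LinearMap.toMatrix bX bX (σ u) with hMX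
  set MY : G → Matrix (Fin dY) (Fin dY) ℂ := fun u => LinearMap.toMatrix bY bY (τ u) with hMY
  by_contra hno
  push_neg at hno
  have hzero : ∀ f : X →ₗ[ℂ] Y, (∑ u : G, (τ u) ∘ₗ f ∘ₗ (σ u⁻¹)) = 0 := by
    intro f
    by_contra hne
    exact hne (hno _ (fun g x => avg_equivariant σ τ f g x))
  apply hsum
  have key : ∀ (i : Fin dY) (j : Fin dX),
      ∑ u : G, MY u * Matrix.single i j (1:ℂ) * MX u⁻¹ = 0 := by
    intro i j
    set f0 : X →ₗ[ℂ] Y := (LinearMap.toMatrix bX bY).symm (Matrix.single i j (1:ℂ)) with hf0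
    have h0 := congrArg (LinearMap.toMatrix bX bY) (hzero f0)
    rw [map_sum, map_zero] at h0
    rw [← h0]
    refine Finset.sum_congr rfl fun u _ => ?_
    rw [LinearMap.toMatrix_comp bX bY bY, LinearMap.toMatrix_comp bX bX bY, hf0,
      LinearEquiv.apply_symm_apply, Matrix.mul_assoc]
  have hterm : ∀ u : G, trace ℂ Y (τ u) * trace ℂ X (σ u⁻¹)
      = ∑ i : Fin dY, ∑ j : Fin dX, (MY u) i i * (MX u⁻¹) j j := by
    intro u
    rw [trace_eq_matrix_trace ℂ bY, trace_eq_matrix_trace ℂ bX, Matrix.trace, Matrix.trace,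
      Finset.sum_mul_sum]
    rfl
  calc ∑ u : G, trace ℂ Y (τ u) * trace ℂ X (σ u⁻¹)
      = ∑ u : G, ∑ i : Fin dY, ∑ j : Fin dX, (MY u) i i * (MX u⁻¹) j j :=
        Finset.sum_congr rfl fun u _ => hterm u
    _ = ∑ i : Fin dY, ∑ j : Fin dX, ∑ u : G, (MY u) i i * (MX u⁻¹) j j := by
        rw [Finset.sum_comm]
        exact Finset.sum_congr rfl fun i _ => Finset.sum_comm
    _ = ∑ i : Fin dY, ∑ j : Fin dX, ((0 : Matrix (Fin dY) (Fin dX) ℂ)) i j := by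
        refine Finset.sum_congr rfl fun i _ => Finset.sum_congr rfl fun j _ => ?_
        rw [← key i j, Matrix.sum_apply]
        exact Finset.sum_congr rfl fun u _ => (mul_std_mul (MY u) (MX u⁻¹) i i j j).symm
    _ = 0 := by simp
end Two

section Vanish
variable {G : Type*} [Group G]

/-- If `y g y⁻¹ = g c` where `ρ c` acts by a scalar `a ≠ 1`, then `tr (ρ g) = 0`. -/
private lemma conj_trace_zero {X : Type*} [AddCommGroup X] [Module ℂ X] [FiniteDimensional ℂ X]
    (ρ : Representation ℂ G X) {g y c : G} (hc : y * g * y⁻¹ = g * c) {a : ℂ}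
    (hca : ∀ x : X, ρ c x = a • x) (ha : a ≠ 1) :
    trace ℂ X (ρ g) = 0 := by
  have h1 : trace ℂ X (ρ (y * g * y⁻¹)) = trace ℂ X (ρ g) := by
    have e1 : ρ (y * g * y⁻¹) = (ρ y * ρ g) * ρ y⁻¹ := by rw [← map_mul, ← map_mul]
    rw [e1, LinearMap.trace_mul_comm, ← mul_assoc, ← map_mul]
    simp
  have h2 : ρ (g * c) = a • ρ g := by
    ext x
    rw [map_mul]
    simp [Module.End.mul_apply, hca x, map_smul]
  have h3 : trace ℂ X (ρ (g * c)) = a * trace ℂ X (ρ g) := by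
    rw [h2, map_smul, smul_eq_mul]
  rw [hc, h3] at h1
  by_contra h
  exact ha (mul_right_cancel₀ h (h1.trans (one_mul _).symm))

end Vanish

section Maschke
variable {G : Type*} [Group G] [Fintype G]

/-- Hand-rolled Maschke: every invariant submodule has an invariant complement. -/
private lemma invariant_compl {X : Type*} [AddCommGroup X] [Module ℂ X] [FiniteDimensional ℂ X]
    (σ : Representation ℂ G X) (S : Submodule ℂ X) (hS : ∀ g : G, ∀ x ∈ S, σ g x ∈ S) :
    ∃ Q : Submodule ℂ X, (∀ g : G, ∀ x ∈ Q, σ g x ∈ Q) ∧ IsCompl S Q := by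
  obtain ⟨S', hS'⟩ := Submodule.exists_isCompl S
  set π : X →ₗ[ℂ] X := S.subtype ∘ₗ S.projectionOnto S' hS' with hπ
  have hπmem : ∀ x, π x ∈ S := fun x => (S.projectionOnto S' hS' x).2
  have hπid : ∀ x ∈ S, π x = x := fun x hx => by
    simp [hπ, Submodule.projectionOnto_apply_left hS' ⟨x, hx⟩]
  set e : X →ₗ[ℂ] X := (Fintype.card G : ℂ)⁻¹ • ∑ u : G, (σ u) ∘ₗ π ∘ₗ (σ u⁻¹) with he
  have hemem : ∀ x, e x ∈ S := by
    intro x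
    rw [he]
    simp only [LinearMap.smul_apply, LinearMap.sum_apply, LinearMap.comp_apply]
    exact Submodule.smul_mem _ _ (Submodule.sum_mem _ fun u _ => hS u _ (hπmem _))
  have hcard : (Fintype.card G : ℂ) ≠ 0 := Nat.cast_ne_zero.mpr Fintype.card_ne_zero
  have heid : ∀ x ∈ S, e x = x := by
    intro x hx
    rw [he]
    simp only [LinearMap.smul_apply, LinearMap.sum_apply, LinearMap.comp_apply]
    have : ∀ u : G, σ u (π (σ u⁻¹ x)) = x := by
      intro u
      rw [hπid _ (hS u⁻¹ x hx), ← Module.End.mul_apply, ← map_mul]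
      simp
    rw [Finset.sum_congr rfl fun u _ => this u, Finset.sum_const, Finset.card_univ,
      ← Nat.cast_smul_eq_nsmul ℂ, smul_smul, inv_mul_cancel₀ hcard, one_smul]
  have hequiv : ∀ g x, e (σ g x) = σ g (e x) := by
    intro g x
    rw [he]
    simp only [LinearMap.smul_apply, map_smul]
    congr 1
    exact avg_equivariant σ σ π g x
  refine ⟨LinearMap.ker e, ?_, ?_⟩
  · intro g x hx
    rw [LinearMap.mem_ker] at hx ⊢
    rw [hequiv, hx, map_zero]
  · constructor
    · rw [disjoint_iff]
      ext x
      simp only [Submodule.mem_inf, Submodule.mem_bot]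
      constructor
      · rintro ⟨h1, h2⟩
        rw [LinearMap.mem_ker] at h2
        rw [← heid x h1, h2]
      · rintro rfl
        exact ⟨S.zero_mem, LinearMap.mem_ker.mpr (map_zero e)⟩
    · rw [codisjoint_iff, eq_top_iff]
      intro x _
      have h1 : e x ∈ S := hemem x
      have h2 : x - e x ∈ LinearMap.ker e := by
        rw [LinearMap.mem_ker, map_sub, heid _ h1, sub_self]
      have : x = e x + (x - e x) := by abel
      rw [this]
      exact Submodule.add_mem _ (Submodule.mem_sup_left h1) (Submodule.mem_sup_right h2)

end Maschke

section Res
variable {G : Type*} [Group G]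

/-- Restriction of a representation to an invariant submodule. -/
private def resRep {X : Type*} [AddCommGroup X] [Module ℂ X]
    (σ : Representation ℂ G X) (S : Submodule ℂ X) (hS : ∀ g : G, ∀ x ∈ S, σ g x ∈ S) :
    Representation ℂ G ↥S where
  toFun g := (σ g).restrict (fun x hx => hS g x hx)
  map_one' := by
    ext x
    simp [LinearMap.restrict_apply]
  map_mul' g h := by
    ext x
    simp [LinearMap.restrict_apply, Module.End.mul_apply]

private lemma resRep_apply {X : Type*} [AddCommGroup X] [Module ℂ X]
    (σ : Representation ℂ G X) (S : Submodule ℂ X) (hS : ∀ g : G, ∀ x ∈ S, σ g x ∈ S)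
    (g : G) (x : ↥S) : (resRep σ S hS g x : X) = σ g (x : X) := rfl

end Res

section Decomp
universe v w
variable {G : Type*} [Group G] [Fintype G]

private lemma decomp_aux {V₁ : Type v} [AddCommGroup V₁] [Module ℂ V₁]
    [FiniteDimensional ℂ V₁] (η₁ : Representation ℂ G V₁)
    {T : Type*} (ι : T → G) (χ : T → ℂ)
    (hu : ∀ (X : Type w) [AddCommGroup X] [Module ℂ X] [FiniteDimensional ℂ X],
      ∀ σ : Representation ℂ G X, IrreducibleRep σ → (∀ t x, σ (ι t) x = χ t • x) →
      ∃ e : V₁ ≃ₗ[ℂ] X, ∀ g v, e (η₁ g v) = σ g (e v)) :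
    ∀ (k : ℕ) (X : Type w) [AddCommGroup X] [Module ℂ X] [FiniteDimensional ℂ X],
      ∀ (σ : Representation ℂ G X), finrank ℂ X = k → (∀ t x, σ (ι t) x = χ t • x) →
      ∃ (n : ℕ) (e : X ≃ₗ[ℂ] (Fin n → V₁)), ∀ g x i, e (σ g x) i = η₁ g (e x i) := by
  intro k
  induction k using Nat.strong_induction_on with
  | _ k IH =>
  intro X _ _ _ σ hrank hCC
  rcases subsingleton_or_nontrivial X with hX | hX
  · haveI : Subsingleton (Fin 0 → V₁) := ⟨fun a b => funext fun i => i.elim0⟩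
    refine ⟨0, LinearEquiv.ofLinear 0 0 (LinearMap.ext fun x => funext fun i => i.elim0)
      (by ext x; exact Subsingleton.elim _ _), fun g x i => i.elim0⟩
  -- find a minimal nonzero invariant submodule S
  set A : Set (Submodule ℂ X) := {pp | pp ≠ ⊥ ∧ ∀ g : G, ∀ x ∈ pp, σ g x ∈ pp} with hA
  have hAtop : (⊤ : Submodule ℂ X) ∈ A := by
    constructor
    · intro h
      obtain ⟨x, hx⟩ := exists_ne (0 : X)
      have : x ∈ (⊤ : Submodule ℂ X) := Submodule.mem_top
      rw [h, Submodule.mem_bot] at this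
      exact hx this
    · intro g x _
      exact Submodule.mem_top
  set N : Set ℕ := {r | ∃ pp ∈ A, finrank ℂ pp = r} with hN
  have hNne : N.Nonempty := ⟨finrank ℂ (⊤ : Submodule ℂ X), ⊤, hAtop, rfl⟩
  obtain ⟨S, hSA, hSrank⟩ := Nat.sInf_mem hNne
  have hmin : ∀ pp ∈ A, finrank ℂ S ≤ finrank ℂ pp := fun pp h =>
    hSrank ▸ Nat.sInf_le ⟨pp, h, rfl⟩
  haveI hSnt : Nontrivial ↥S := Submodule.nontrivial_iff_ne_bot.mpr hSA.1
  set σS := resRep σ S hSA.2 with hσS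
  have hirrS : IrreducibleRep σS := by
    constructor
    · intro h
      obtain ⟨x, hx⟩ := exists_ne (0 : ↥S)
      have : x ∈ (⊤ : Submodule ℂ ↥S) := Submodule.mem_top
      rw [← h, Submodule.mem_bot] at this
      exact hx this
    · intro pp hpp
      by_cases hbot : pp = ⊥
      · exact Or.inl hbot
      right
      set pp' := pp.map S.subtype with hpp'
      have h1 : pp' ∈ A := by
        constructor
        · obtain ⟨x, hx, hx0⟩ := (Submodule.ne_bot_iff pp).mp hbot
          refine (Submodule.ne_bot_iff pp').mpr ⟨(x : X), Submodule.mem_map_of_mem hx, ?_⟩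
          simpa using hx0
        · rintro g y ⟨v, hv, rfl⟩
          exact ⟨σS g v, hpp g v hv, rfl⟩
      have h2 : finrank ℂ S ≤ finrank ℂ pp' := hmin _ h1
      have h3 : finrank ℂ pp = finrank ℂ pp' :=
        (Submodule.equivMapOfInjective S.subtype (Submodule.injective_subtype S) pp).finrank_eq
      have h4 : finrank ℂ pp ≤ finrank ℂ ↥S := pp.finrank_le
      exact Submodule.eq_top_of_finrank_eq (le_antisymm h4 (by omega))
  have hCCS : ∀ t x, σS (ι t) x = χ t • x := by
    intro t x
    apply Subtype.ext
    rw [resRep_apply]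
    simpa using hCC t (x : X)
  obtain ⟨eS, heS⟩ := hu ↥S σS hirrS hCCS
  obtain ⟨Q, hQinv, hQcompl⟩ := invariant_compl σ S hSA.2
  set σQ := resRep σ Q hQinv with hσQ
  have hCCQ : ∀ t x, σQ (ι t) x = χ t • x := by
    intro t x
    apply Subtype.ext
    rw [resRep_apply]
    simpa using hCC t (x : X)
  have hfr : finrank ℂ S + finrank ℂ Q = k := by
    have h1 := Submodule.finrank_sup_add_finrank_inf_eq S Q
    rw [hQcompl.sup_eq_top, hQcompl.inf_eq_bot, finrank_top, finrank_bot, hrank] at h1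
    omega
  have hSpos : 0 < finrank ℂ S := finrank_pos
  have hQlt : finrank ℂ Q < k := by omega
  obtain ⟨n, eQ, hQe⟩ := IH (finrank ℂ Q) hQlt ↥Q σQ rfl hCCQ
  -- assemble the equivalence
  set gl : (Fin (n+1) → V₁) →ₗ[ℂ] X :=
    S.subtype ∘ₗ (eS.toLinearMap ∘ₗ LinearMap.proj 0) +
      Q.subtype ∘ₗ (eQ.symm.toLinearMap ∘ₗ LinearMap.funLeft ℂ V₁ Fin.succ) with hgldef
  have hgl : ∀ w : Fin (n+1) → V₁,
      gl w = (eS (w 0) : X) + (eQ.symm (fun i => w i.succ) : X) := fun w => rfl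
  have hdisj := Submodule.disjoint_def.mp hQcompl.disjoint
  have hinj : Function.Injective gl := by
    rw [← LinearMap.ker_eq_bot, Submodule.eq_bot_iff]
    intro w hw
    rw [LinearMap.mem_ker, hgl] at hw
    have hmem : (eS (w 0) : X) ∈ Q := by
      have : (eS (w 0) : X) = -(eQ.symm (fun i => w i.succ) : X) :=
        eq_neg_of_add_eq_zero_left hw
      rw [this]
      exact Q.neg_mem (eQ.symm (fun i => w i.succ)).2
    have h0 : (eS (w 0) : X) = 0 := hdisj _ (eS (w 0)).2 hmem
    have hw0 : w 0 = 0 := by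
      have : eS (w 0) = 0 := Subtype.ext h0
      simpa using (map_eq_zero_iff eS eS.injective).mp this
    have htail : (fun i : Fin n => w i.succ) = 0 := by
      rw [h0, zero_add] at hw
      exact (map_eq_zero_iff eQ.symm eQ.symm.injective).mp (Subtype.ext hw)
    funext i
    refine Fin.cases ?_ ?_ i
    · exact hw0
    · intro j
      exact congrFun htail j
  have hsurj : Function.Surjective gl := by
    intro x
    have hx : x ∈ S ⊔ Q := by
      rw [hQcompl.sup_eq_top]
      exact Submodule.mem_top
    obtain ⟨s, hs, q, hq, hsq⟩ := Submodule.mem_sup.mp hx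
    refine ⟨Fin.cons (eS.symm ⟨s, hs⟩) (eQ ⟨q, hq⟩), ?_⟩
    rw [hgl]
    have h1 : (Fin.cons (eS.symm ⟨s, hs⟩) (eQ ⟨q, hq⟩) : Fin (n+1) → V₁) 0
        = eS.symm ⟨s, hs⟩ := Fin.cons_zero _ _
    have h2 : (fun i : Fin n => (Fin.cons (eS.symm ⟨s, hs⟩) (eQ ⟨q, hq⟩) : Fin (n+1) → V₁) i.succ)
        = eQ ⟨q, hq⟩ := funext fun i => Fin.cons_succ _ _ i
    rw [h1, h2, LinearEquiv.apply_symm_apply, LinearEquiv.symm_apply_apply]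
    exact hsq
  set E := LinearEquiv.ofBijective gl ⟨hinj, hsurj⟩ with hE
  have hEapp : ∀ w, E w = gl w := fun w => rfl
  have hkey : ∀ (g : G) (w : Fin (n+1) → V₁), gl (fun i => η₁ g (w i)) = σ g (gl w) := by
    intro g w
    rw [hgl, hgl, map_add]
    have hS1 : (eS (η₁ g (w 0)) : X) = σ g (eS (w 0) : X) := by
      rw [heS g (w 0)]
      rfl
    have hQ1 : eQ.symm (fun i : Fin n => η₁ g (w i.succ)) = σQ g (eQ.symm (fun i => w i.succ)) := by
      apply eQ.injective
      rw [LinearEquiv.apply_symm_apply]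
      funext i
      rw [hQe g _ i, LinearEquiv.apply_symm_apply]
    have hQ2 : (eQ.symm (fun i : Fin n => η₁ g (w i.succ)) : X)
        = σ g (eQ.symm (fun i => w i.succ) : X) := by
      rw [hQ1]
      rfl
    exact congrArg₂ (· + ·) hS1 hQ2
  refine ⟨n + 1, E.symm, ?_⟩
  intro g x i
  have hx : E.symm.symm (fun i => η₁ g (E.symm x i)) = σ g x := by
    rw [LinearEquiv.symm_symm, hEapp, hkey g (E.symm x)]
    have : gl (E.symm x) = E (E.symm x) := (hEapp _).symm
    rw [this, LinearEquiv.apply_symm_apply]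
  have : E.symm (σ g x) = fun i => η₁ g (E.symm x i) := by
    rw [← hx, LinearEquiv.symm_symm, LinearEquiv.symm_apply_apply]
  rw [this]
end Decomp

section Chars

private lemma central_trace {G : Type*} [Group G] {X : Type*} [AddCommGroup X] [Module ℂ X]
    [FiniteDimensional ℂ X] (σ : Representation ℂ G X) {g : G} {a : ℂ}
    (h : ∀ x, σ g x = a • x) : trace ℂ X (σ g) = a * (finrank ℂ X : ℂ) := by
  have h1 : σ g = a • (1 : Module.End ℂ X) := LinearMap.ext fun x => by simp [h x]
  rw [h1, map_smul, trace_one, smul_eq_mul]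

private lemma sum_pair_eq {G : Type*} [Group G] [Fintype G] {X Y : Type*}
    [AddCommGroup X] [Module ℂ X] [FiniteDimensional ℂ X]
    [AddCommGroup Y] [Module ℂ Y] [FiniteDimensional ℂ Y]
    (σ : Representation ℂ G X) (τ : Representation ℂ G Y)
    (P : G → Prop) [DecidablePred P]
    (h0 : ∀ g, ¬ P g → trace ℂ X (σ g) = 0)
    (hpair : ∀ g, P g → trace ℂ X (σ g) * trace ℂ Y (τ g⁻¹)
      = ((finrank ℂ X : ℂ) * (finrank ℂ Y : ℂ))) :
    ∑ g : G, trace ℂ X (σ g) * trace ℂ Y (τ g⁻¹)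
      = (Fintype.card {g : G // P g} : ℂ) * ((finrank ℂ X : ℂ) * (finrank ℂ Y : ℂ)) := by
  rw [Fintype.card_subtype]
  calc ∑ g : G, trace ℂ X (σ g) * trace ℂ Y (τ g⁻¹)
      = ∑ g : G, (if P g then ((finrank ℂ X : ℂ) * (finrank ℂ Y : ℂ)) else 0) := by
        refine Finset.sum_congr rfl fun g _ => ?_
        by_cases h : P g
        · rw [if_pos h]; exact hpair g h
        · rw [if_neg h, h0 g h, zero_mul]
    _ = ∑ g ∈ Finset.univ.filter P, ((finrank ℂ X : ℂ) * (finrank ℂ Y : ℂ)) :=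
        (Finset.sum_filter _ _).symm
    _ = ((Finset.univ.filter P).card : ℂ) * ((finrank ℂ X : ℂ) * (finrank ℂ Y : ℂ)) := by
        rw [Finset.sum_const, nsmul_eq_mul]

end Chars

section Heis
variable {H₂ : Type*} [Group H₂] (H₁ : Subgroup H₂)
  (hZ1 : Subgroup.center H₂ ≤ H₁)
  (hcomm : ∀ x y : H₂, ⁅x, y⁆ ∈ Subgroup.center H₂)
  (φ : ↥(Subgroup.center H₂) →* ℂˣ)

/-- Character vanishing off the center, for representations of `H₁` with central character φ. -/
private lemma vanish1
    (hnd1 : ∀ x : H₂, x ∈ H₁ → (∀ y ∈ H₁, φ ⟨⁅x, y⁆, hcomm x y⟩ = 1) →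
      x ∈ Subgroup.center H₂)
    {X : Type*} [AddCommGroup X] [Module ℂ X] [FiniteDimensional ℂ X]
    (σ : Representation ℂ ↥H₁ X)
    (hCC : ∀ (z : ↥(Subgroup.center H₂)) (x : X), σ ⟨(z : H₂), hZ1 z.2⟩ x = (φ z : ℂ) • x)
    (g : ↥H₁) (hg : (g : H₂) ∉ Subgroup.center H₂) :
    trace ℂ X (σ g) = 0 := by
  have hginv : ((g : H₂))⁻¹ ∉ Subgroup.center H₂ := by
    intro h
    exact hg (by simpa using (Subgroup.center H₂).inv_mem h)
  have hne : ¬ ∀ y ∈ H₁, φ ⟨⁅((g : H₂))⁻¹, y⁆, hcomm _ y⟩ = 1 := by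
    intro h
    exact hginv (hnd1 ((g : H₂))⁻¹ (H₁.inv_mem g.2) h)
  push_neg at hne
  obtain ⟨y, hyH, hy⟩ := hne
  set c : ↥(Subgroup.center H₂) := ⟨⁅((g : H₂))⁻¹, y⁆, hcomm _ y⟩ with hcdef
  have hconj : (⟨y, hyH⟩ : ↥H₁) * g * (⟨y, hyH⟩ : ↥H₁)⁻¹ = g * ⟨(c : H₂), hZ1 c.2⟩ := by
    apply Subtype.ext
    show y * (g : H₂) * y⁻¹ = (g : H₂) * ⁅((g : H₂))⁻¹, y⁆
    rw [commutatorElement_def]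
    group
  have hca : ((φ c : ℂˣ) : ℂ) ≠ 1 := fun h => hy (Units.ext h)
  exact conj_trace_zero σ hconj (fun x => hCC c x) hca

/-- Central trace pairing for representations of `H₁` with central character φ. -/
private lemma pair1
    {X : Type*} [AddCommGroup X] [Module ℂ X] [FiniteDimensional ℂ X]
    (σ : Representation ℂ ↥H₁ X)
    (hCC : ∀ (z : ↥(Subgroup.center H₂)) (x : X), σ ⟨(z : H₂), hZ1 z.2⟩ x = (φ z : ℂ) • x)
    {Y : Type*} [AddCommGroup Y] [Module ℂ Y] [FiniteDimensional ℂ Y]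
    (τ : Representation ℂ ↥H₁ Y)
    (hCCτ : ∀ (z : ↥(Subgroup.center H₂)) (y : Y), τ ⟨(z : H₂), hZ1 z.2⟩ y = (φ z : ℂ) • y)
    (g : ↥H₁) (hg : (g : H₂) ∈ Subgroup.center H₂) :
    trace ℂ X (σ g) * trace ℂ Y (τ g⁻¹)
      = ((finrank ℂ X : ℂ) * (finrank ℂ Y : ℂ)) := by
  set z : ↥(Subgroup.center H₂) := ⟨(g : H₂), hg⟩ with hzdef
  have hginv : ((g⁻¹ : ↥H₁) : H₂) ∈ Subgroup.center H₂ := by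
    simpa using (Subgroup.center H₂).inv_mem hg
  set z' : ↥(Subgroup.center H₂) := ⟨((g⁻¹ : ↥H₁) : H₂), hginv⟩ with hz'def
  have h1 : trace ℂ X (σ g) = ((φ z : ℂˣ) : ℂ) * (finrank ℂ X : ℂ) := by
    refine central_trace σ (fun x => ?_)
    have : (⟨(z : H₂), hZ1 z.2⟩ : ↥H₁) = g := Subtype.ext rfl
    rw [← this]
    exact hCC z x
  have h2 : trace ℂ Y (τ g⁻¹) = ((φ z' : ℂˣ) : ℂ) * (finrank ℂ Y : ℂ) := by
    refine central_trace τ (fun y => ?_)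
    have : (⟨(z' : H₂), hZ1 z'.2⟩ : ↥H₁) = g⁻¹ := Subtype.ext rfl
    rw [← this]
    exact hCCτ z' y
  have h3 : ((φ z : ℂˣ) : ℂ) * ((φ z' : ℂˣ) : ℂ) = 1 := by
    have hzz : z * z' = 1 := by
      apply Subtype.ext
      show (g : H₂) * ((g⁻¹ : ↥H₁) : H₂) = 1
      simp
    rw [← Units.val_mul, ← map_mul, hzz, map_one, Units.val_one]
  rw [h1, h2]
  calc (((φ z : ℂˣ) : ℂ) * (finrank ℂ X : ℂ)) * (((φ z' : ℂˣ) : ℂ) * (finrank ℂ Y : ℂ))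
      = (((φ z : ℂˣ) : ℂ) * ((φ z' : ℂˣ) : ℂ)) * ((finrank ℂ X : ℂ) * (finrank ℂ Y : ℂ)) := by
        ring
    _ = ((finrank ℂ X : ℂ) * (finrank ℂ Y : ℂ)) := by rw [h3, one_mul]

end Heis

section Uniq
universe w
variable {H₂ : Type*} [Group H₂] [Fintype H₂]

/-- Uniqueness of the irreducible representation of `H₁` with central character `φ`. -/
private lemma uniq_lemma (H₁ : Subgroup H₂) [Fintype ↥H₁]
    (hZ1 : Subgroup.center H₂ ≤ H₁)
    (hcomm : ∀ x y : H₂, ⁅x, y⁆ ∈ Subgroup.center H₂)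
    (φ : ↥(Subgroup.center H₂) →* ℂˣ)
    (hnd1 : ∀ x : H₂, x ∈ H₁ → (∀ y ∈ H₁, φ ⟨⁅x, y⁆, hcomm x y⟩ = 1) →
      x ∈ Subgroup.center H₂)
    {V₁ : Type*} [AddCommGroup V₁] [Module ℂ V₁] [FiniteDimensional ℂ V₁]
    (η₁ : Representation ℂ ↥H₁ V₁) (hη₁ : IrreducibleRep η₁)
    (hη₁c : ∀ (z : ↥(Subgroup.center H₂)) (v : V₁),
      η₁ ⟨(z : H₂), hZ1 z.2⟩ v = (φ z : ℂ) • v)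
    (X : Type w) [AddCommGroup X] [Module ℂ X] [FiniteDimensional ℂ X]
    (σ : Representation ℂ ↥H₁ X) (hσ : IrreducibleRep σ)
    (hCC : ∀ (z : ↥(Subgroup.center H₂)) (x : X), σ ⟨(z : H₂), hZ1 z.2⟩ x = (φ z : ℂ) • x) :
    ∃ e : V₁ ≃ₗ[ℂ] X, ∀ g v, e (η₁ g v) = σ g (e v) := by
  classical
  haveI : Nontrivial V₁ := irr_nontrivial hη₁.1
  haveI : Nontrivial X := irr_nontrivial hσ.1
  have hsum : ∑ u : ↥H₁, trace ℂ X (σ u) * trace ℂ V₁ (η₁ u⁻¹) ≠ 0 := by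
    rw [sum_pair_eq σ η₁ (fun g : ↥H₁ => (g : H₂) ∈ Subgroup.center H₂)
      (fun g hg => vanish1 H₁ hZ1 hcomm φ hnd1 σ hCC g hg)
      (fun g hg => pair1 H₁ hZ1 φ σ hCC η₁ hη₁c g hg)]
    have hc : Fintype.card {g : ↥H₁ // (g : H₂) ∈ Subgroup.center H₂} ≠ 0 := by
      haveI : Nonempty {g : ↥H₁ // (g : H₂) ∈ Subgroup.center H₂} :=
        ⟨⟨1, by simpa using (Subgroup.center H₂).one_mem⟩⟩
      exact Fintype.card_ne_zero
    exact mul_ne_zero (Nat.cast_ne_zero.mpr hc)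
      (mul_ne_zero (Nat.cast_ne_zero.mpr finrank_pos.ne')
        (Nat.cast_ne_zero.mpr finrank_pos.ne'))
  obtain ⟨f, hfe, hf0⟩ := exists_equivariant_of_sum_ne_zero η₁ σ hsum
  exact equiv_of_ne_zero η₁ σ hη₁ hσ f hfe hf0

end Uniq

/-- Let `H₁ ⊆ H₂` be finite Heisenberg `p`-groups with common center `Z` and let `φ` be
a nontrivial character of `Z`.  If `η₁, η₂` are irreducible representations of
`H₁, H₂` with central character `φ`, then `η₂|_{H₁}` is isomorphic to the direct sum of
`[H₂:H₁]^{1/2}` copies of `η₁`. -/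
theorem heisenberg_restriction_isotypic {p : ℕ} [Fact p.Prime]
    {H₂ : Type*} [Group H₂] [Fintype H₂] (hp : IsPGroup p H₂)
    (H₁ : Subgroup H₂)
    -- common center: the center of `H₂` is contained in `H₁` and coincides with the
    -- center of `H₁`
    (hZ1 : Subgroup.center H₂ ≤ H₁)
    (hcenter1 : ∀ x : ↥H₁, x ∈ Subgroup.center ↥H₁ ↔ (x : H₂) ∈ Subgroup.center H₂)
    -- Heisenberg structure: commutators central, quotients elementary abelian
    (hcomm : ∀ x y : H₂, ⁅x, y⁆ ∈ Subgroup.center H₂)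
    (helem : ∀ x : H₂, x ^ p ∈ Subgroup.center H₂)
    (φ : ↥(Subgroup.center H₂) →* ℂˣ) (hφ : φ ≠ 1)
    -- nondegeneracy of the commutator pairing on `H₂/Z` and on `H₁/Z`
    (hnd2 : ∀ x : H₂, (∀ y : H₂, φ ⟨⁅x, y⁆, hcomm x y⟩ = 1) → x ∈ Subgroup.center H₂)
    (hnd1 : ∀ x : H₂, x ∈ H₁ → (∀ y ∈ H₁, φ ⟨⁅x, y⁆, hcomm x y⟩ = 1) →
      x ∈ Subgroup.center H₂)
    {V₁ V₂ : Type*} [AddCommGroup V₁] [Module ℂ V₁] [AddCommGroup V₂] [Module ℂ V₂]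
    [FiniteDimensional ℂ V₁] [FiniteDimensional ℂ V₂]
    (η₁ : Representation ℂ ↥H₁ V₁) (η₂ : Representation ℂ H₂ V₂)
    (hη₁ : IrreducibleRep η₁) (hη₂ : IrreducibleRep η₂)
    (hη₁c : ∀ (z : ↥(Subgroup.center H₂)) (v : V₁),
      η₁ ⟨(z : H₂), hZ1 z.2⟩ v = (φ z : ℂ) • v)
    (hη₂c : ∀ (z : ↥(Subgroup.center H₂)) (v : V₂), η₂ (z : H₂) v = (φ z : ℂ) • v) :
    ∃ m : ℕ, m ^ 2 = H₁.index ∧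
      ∃ e : V₂ ≃ₗ[ℂ] (Fin m → V₁),
        ∀ (h : ↥H₁) (v : V₂) (i : Fin m), e (η₂ (h : H₂) v) i = η₁ h (e v i) := by
  classical
  haveI : Fintype ↥H₁ := Fintype.ofFinite _
  haveI : Nontrivial V₁ := irr_nontrivial hη₁.1
  haveI : Nontrivial V₂ := irr_nontrivial hη₂.1
  set σ₂ : Representation ℂ ↥H₁ V₂ := η₂.comp H₁.subtype with hσ₂
  have hCC2 : ∀ (z : ↥(Subgroup.center H₂)) (v : V₂), σ₂ ⟨(z : H₂), hZ1 z.2⟩ v = (φ z : ℂ) • v :=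
    fun z v => hη₂c z v
  obtain ⟨n, e, he⟩ := decomp_aux η₁
    (fun z : ↥(Subgroup.center H₂) => (⟨(z : H₂), hZ1 z.2⟩ : ↥H₁)) (fun z => ((φ z : ℂˣ) : ℂ))
    (fun X _ _ _ σ hσ hCC => uniq_lemma H₁ hZ1 hcomm φ hnd1 η₁ hη₁ hη₁c X σ hσ hCC)
    (finrank ℂ V₂) V₂ σ₂ rfl hCC2
  refine ⟨n, ?_, e, fun h v i => he h v i⟩
  -- numerology
  set d₁ := finrank ℂ V₁ with hd₁
  set d₂ := finrank ℂ V₂ with hd₂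
  set cZ := Fintype.card ↥(Subgroup.center H₂) with hcZ
  have hd2 : d₂ = n * d₁ := by
    have h1 := e.finrank_eq
    rw [Module.finrank_pi_fintype, Finset.sum_const, Finset.card_univ, Fintype.card_fin,
      smul_eq_mul] at h1
    exact h1
  -- count for H₁
  have hcount1 : cZ * (d₁ * d₁) = Fintype.card ↥H₁ := by
    have hs := sum_trace_eq_card η₁ hη₁
    rw [sum_pair_eq η₁ η₁ (fun g : ↥H₁ => (g : H₂) ∈ (Subgroup.center H₂))
      (fun g hg => vanish1 H₁ hZ1 hcomm φ hnd1 η₁ hη₁c g hg)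
      (fun g hg => pair1 H₁ hZ1 φ η₁ hη₁c η₁ hη₁c g hg)] at hs
    have hcard : Fintype.card {g : ↥H₁ // (g : H₂) ∈ (Subgroup.center H₂)} = cZ := by
      refine Fintype.card_congr ⟨fun g => ⟨(g : ↥H₁), g.2⟩, fun z => ⟨⟨(z : H₂), hZ1 z.2⟩, z.2⟩,
        fun g => ?_, fun z => ?_⟩
      · apply Subtype.ext; apply Subtype.ext; rfl
      · apply Subtype.ext; rfl
    rw [hcard] at hs
    exact_mod_cast hs
  -- count for H₂
  have hvan2 : ∀ g : H₂, ¬ g ∈ (Subgroup.center H₂) → trace ℂ V₂ (η₂ g) = 0 := by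
    intro g hg
    have hginv : g⁻¹ ∉ (Subgroup.center H₂) := fun h => hg (by simpa using (Subgroup.center H₂).inv_mem h)
    have hne : ¬ ∀ y : H₂, φ ⟨⁅g⁻¹, y⁆, hcomm g⁻¹ y⟩ = 1 := fun h => hginv (hnd2 g⁻¹ h)
    push_neg at hne
    obtain ⟨y, hy⟩ := hne
    set c : ↥(Subgroup.center H₂) := ⟨⁅g⁻¹, y⁆, hcomm g⁻¹ y⟩ with hcdef
    have hconj : y * g * y⁻¹ = g * (c : H₂) := by
      show y * g * y⁻¹ = g * ⁅g⁻¹, y⁆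
      rw [commutatorElement_def]
      group
    exact conj_trace_zero η₂ hconj (fun x => hη₂c c x) (fun h => hy (Units.ext h))
  have hpair2 : ∀ g : H₂, g ∈ (Subgroup.center H₂) → trace ℂ V₂ (η₂ g) * trace ℂ V₂ (η₂ g⁻¹)
      = ((d₂ : ℂ) * (d₂ : ℂ)) := by
    intro g hg
    have hginv : g⁻¹ ∈ (Subgroup.center H₂) := (Subgroup.center H₂).inv_mem hg
    have h1 : trace ℂ V₂ (η₂ g) = ((φ ⟨g, hg⟩ : ℂˣ) : ℂ) * (d₂ : ℂ) :=
      central_trace η₂ (fun x => hη₂c ⟨g, hg⟩ x)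
    have h2 : trace ℂ V₂ (η₂ g⁻¹) = ((φ ⟨g⁻¹, hginv⟩ : ℂˣ) : ℂ) * (d₂ : ℂ) :=
      central_trace η₂ (fun x => hη₂c ⟨g⁻¹, hginv⟩ x)
    have h3 : ((φ ⟨g, hg⟩ : ℂˣ) : ℂ) * ((φ ⟨g⁻¹, hginv⟩ : ℂˣ) : ℂ) = 1 := by
      rw [← Units.val_mul, ← map_mul]
      have : (⟨g, hg⟩ : ↥(Subgroup.center H₂)) * ⟨g⁻¹, hginv⟩ = 1 := by
        apply Subtype.ext
        simp
      rw [this, map_one, Units.val_one]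
    rw [h1, h2]
    calc (((φ ⟨g, hg⟩ : ℂˣ) : ℂ) * (d₂ : ℂ)) * (((φ ⟨g⁻¹, hginv⟩ : ℂˣ) : ℂ) * (d₂ : ℂ))
        = (((φ ⟨g, hg⟩ : ℂˣ) : ℂ) * ((φ ⟨g⁻¹, hginv⟩ : ℂˣ) : ℂ)) * ((d₂ : ℂ) * (d₂ : ℂ)) := by
          ring
      _ = ((d₂ : ℂ) * (d₂ : ℂ)) := by rw [h3, one_mul]
  have hcount2 : cZ * (d₂ * d₂) = Fintype.card H₂ := by
    have hs := sum_trace_eq_card η₂ hη₂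
    rw [sum_pair_eq η₂ η₂ (fun g : H₂ => g ∈ (Subgroup.center H₂)) hvan2 hpair2] at hs
    have hcard : Fintype.card {g : H₂ // g ∈ (Subgroup.center H₂)} = cZ := Fintype.card_congr (Equiv.refl _)
    rw [hcard] at hs
    exact_mod_cast hs
  have hidx : Fintype.card ↥H₁ * H₁.index = Fintype.card H₂ := by
    have := H₁.card_mul_index
    simpa [Nat.card_eq_fintype_card] using this
  have hpos : 0 < Fintype.card ↥H₁ := Fintype.card_pos
  have hfinal : Fintype.card ↥H₁ * (n ^ 2) = Fintype.card ↥H₁ * H₁.index := by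
    rw [hidx, ← hcount2, hd2, ← hcount1]
    ring
  have := Nat.eq_of_mul_eq_mul_left hpos hfinal
  omega
end

section
/- Let H be a finite Heisenberg p-group with center Z and let φ be a nontrivial character of Z. Then any irreducible complex representation of H with central character φ has dimension [H:Z]^{1/2}, and any two irreducible representations of H with central character φ are isomorphic. -/
open Representation LinearMap Module

open scoped commutatorElement

section SVNaux

set_option linter.unusedSectionVars false

variable {G : Type*} [Group G] {V W : Type*} [AddCommGroup V] [Module ℂ V]
  [AddCommGroup W] [Module ℂ W]

lemma SVN.irr_nontrivial {ρ : Representation ℂ G V} (h : IrreducibleRep ρ) : Nontrivial V := by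
  by_contra hn
  rw [not_nontrivial_iff_subsingleton] at hn
  exact h.1 ((Submodule.subsingleton_iff ℂ).mpr hn |>.elim _ _)

lemma SVN.rho_inv_apply (ρ : Representation ℂ G V) (g : G) (v : V) : ρ g⁻¹ (ρ g v) = v := by
  rw [← Module.End.mul_apply, ← map_mul, inv_mul_cancel, map_one, Module.End.one_apply]

lemma SVN.schur_bij {ρ : Representation ℂ G V} {σ : Representation ℂ G W}
    (hρ : IrreducibleRep ρ) (hσ : IrreducibleRep σ) {f : V →ₗ[ℂ] W}
    (hf : ∀ (g : G) (v : V), f (ρ g v) = σ g (f v)) (hf0 : f ≠ 0) :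
    Function.Bijective f := by
  constructor
  · rw [← LinearMap.ker_eq_bot]
    rcases hρ.2 (LinearMap.ker f) (fun g v hv => by
      rw [LinearMap.mem_ker] at hv ⊢
      rw [hf g v, hv, map_zero]) with h | h
    · exact h
    · exact absurd (LinearMap.ker_eq_top.mp h) hf0
  · rw [← LinearMap.range_eq_top]
    rcases hσ.2 (LinearMap.range f) (fun g w hw => by
      obtain ⟨v, rfl⟩ := hw
      exact ⟨ρ g v, (hf g v)⟩) with h | h
    · exact absurd (LinearMap.range_eq_bot.mp h) hf0
    · exact h

lemma SVN.mem_invariants_linHom {ρ : Representation ℂ G V} {σ : Representation ℂ G W}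
    {f : V →ₗ[ℂ] W} (hf : f ∈ (Representation.linHom ρ σ).invariants) :
    ∀ (g : G) (v : V), f (ρ g v) = σ g (f v) := by
  intro g v
  have h := (mem_invariants _ f).mp hf g
  have h2 := congrArg (fun (m : V →ₗ[ℂ] W) => m (ρ g v)) h
  simp only [linHom_apply, LinearMap.comp_apply] at h2
  rw [SVN.rho_inv_apply] at h2
  exact h2.symm

lemma SVN.invariants_linHom_self [FiniteDimensional ℂ V] {ρ : Representation ℂ G V}
    (hρ : IrreducibleRep ρ) :
    (Representation.linHom ρ ρ).invariants = ℂ ∙ (LinearMap.id : V →ₗ[ℂ] V) := by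
  haveI := SVN.irr_nontrivial hρ
  ext f
  constructor
  · intro hinv
    have hcomm := SVN.mem_invariants_linHom hinv
    obtain ⟨c, hc⟩ := Module.End.exists_eigenvalue (f : Module.End ℂ V)
    obtain ⟨v, hv⟩ := hc.exists_hasEigenvector
    rw [Submodule.mem_span_singleton]
    refine ⟨c, ?_⟩
    by_contra hne
    set F : V →ₗ[ℂ] V := f - c • LinearMap.id with hF
    have hg0 : F ≠ 0 := fun h0 => hne (by
      rw [hF, sub_eq_zero] at h0; rw [h0])
    have hint : ∀ (g : G) (w : V), F (ρ g w) = ρ g (F w) := by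
      intro g w
      simp [hF, hcomm g w, map_sub, map_smul]
    have hbij := SVN.schur_bij hρ hρ hint hg0
    have hFv : F v = 0 := by
      simp [hF, hv.apply_eq_smul]
    exact hv.2 (hbij.1 (by simpa using hFv))
  · intro hf
    rw [Submodule.mem_span_singleton] at hf
    obtain ⟨c, rfl⟩ := hf
    rw [mem_invariants]
    intro g
    apply LinearMap.ext
    intro v
    simp only [linHom_apply, LinearMap.comp_apply, LinearMap.smul_apply, LinearMap.id_apply]
    rw [map_smul]
    congr 1
    rw [← Module.End.mul_apply, ← map_mul, mul_inv_cancel, map_one, Module.End.one_apply]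

lemma SVN.finrank_invariants_linHom_self [FiniteDimensional ℂ V] {ρ : Representation ℂ G V}
    (hρ : IrreducibleRep ρ) :
    finrank ℂ (Representation.linHom ρ ρ).invariants = 1 := by
  haveI := SVN.irr_nontrivial hρ
  rw [SVN.invariants_linHom_self hρ]
  exact finrank_span_singleton (by
    intro h
    obtain ⟨v, hv⟩ := exists_ne (0 : V)
    exact hv (by simpa using congrArg (fun (m : V →ₗ[ℂ] V) => m v) h))

lemma SVN.trace_linHom_apply (ρ : Representation ℂ G V) (σ : Representation ℂ G W)
    [FiniteDimensional ℂ V] [FiniteDimensional ℂ W] (g : G) :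
    trace ℂ (V →ₗ[ℂ] W) (Representation.linHom ρ σ g)
      = trace ℂ V (ρ g⁻¹) * trace ℂ W (σ g) := by
  let e := dualTensorHomEquiv ℂ V W
  have hcoe : (e : TensorProduct ℂ (Module.Dual ℂ V) W →ₗ[ℂ] (V →ₗ[ℂ] W))
      = dualTensorHom ℂ V W :=
    rfl
  have hconj : Representation.linHom ρ σ g
      = e.conj (TensorProduct.map (ρ.dual g) (σ g)) := by
    apply LinearMap.ext
    intro f
    rw [LinearEquiv.conj_apply]
    have h := Representation.dualTensorHom_comm ρ σ g
    have h2 := congrArg (fun (m : _ →ₗ[ℂ] (V →ₗ[ℂ] W)) => m (e.symm f)) h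
    simp only [LinearMap.comp_apply] at h2 ⊢
    rw [← hcoe] at h2
    simp only [LinearEquiv.coe_coe] at h2
    rw [e.apply_symm_apply] at h2
    rw [← h2]
    simp
  rw [hconj, trace_conj', trace_tensorProduct', Representation.dual_apply, trace_transpose']

lemma SVN.card_mul_finrank_invariants [Fintype G]
    [FiniteDimensional ℂ V] [FiniteDimensional ℂ W]
    (ρ : Representation ℂ G V) (σ : Representation ℂ G W) :
    (Fintype.card G : ℂ) * (finrank ℂ (Representation.linHom ρ σ).invariants : ℂ)
      = ∑ g : G, trace ℂ V (ρ g⁻¹) * trace ℂ W (σ g) := by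
  haveI : Invertible (Fintype.card G : ℂ) :=
    invertibleOfNonzero (Nat.cast_ne_zero.mpr Fintype.card_ne_zero)
  have h := (Representation.isProj_averageMap (Representation.linHom ρ σ)).trace
  have h2 : Representation.averageMap (Representation.linHom ρ σ)
      = ⅟(Fintype.card G : ℂ) • ∑ g : G, Representation.linHom ρ σ g := by
    simp [Representation.averageMap, GroupAlgebra.average, map_sum,
      Representation.asAlgebraHom_of]
  rw [h2, map_smul, map_sum] at h
  have h3 := congrArg (fun x => (Fintype.card G : ℂ) * x) h
  simp only [smul_eq_mul, ← mul_assoc, mul_invOf_self, one_mul] at h3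
  rw [← h3]
  exact Finset.sum_congr rfl fun g _ => SVN.trace_linHom_apply ρ σ g

end SVNaux

section SVNsums

set_option linter.unusedSectionVars false

variable {H : Type*} [Group H] [Fintype H] {V W : Type*} [AddCommGroup V] [Module ℂ V]
  [AddCommGroup W] [Module ℂ W] [FiniteDimensional ℂ V] [FiniteDimensional ℂ W]

lemma SVN.rho_central (ρ : Representation ℂ H V) (φ : ↥(Subgroup.center H) →* ℂˣ)
    (hρc : ∀ (z : ↥(Subgroup.center H)) (v : V), ρ (z : H) v = (φ z : ℂ) • v)
    (z : ↥(Subgroup.center H)) :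
    trace ℂ V (ρ (z : H)) = (φ z : ℂ) * (finrank ℂ V : ℂ) := by
  have h : ρ (z : H) = (φ z : ℂ) • (LinearMap.id : V →ₗ[ℂ] V) := by
    apply LinearMap.ext; intro v; simpa using hρc z v
  rw [h, map_smul, smul_eq_mul]
  congr 1
  exact trace_id ℂ V

lemma SVN.trace_vanish (hcomm : ∀ x y : H, ⁅x, y⁆ ∈ Subgroup.center H)
    (φ : ↥(Subgroup.center H) →* ℂˣ)
    (hnd : ∀ x : H, (∀ y : H, φ ⟨⁅x, y⁆, hcomm x y⟩ = 1) → x ∈ Subgroup.center H)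
    (ρ : Representation ℂ H V)
    (hρc : ∀ (z : ↥(Subgroup.center H)) (v : V), ρ (z : H) v = (φ z : ℂ) • v)
    {x : H} (hx : x ∉ Subgroup.center H) :
    trace ℂ V (ρ x) = 0 := by
  have h1 : ¬ (∀ y : H, φ ⟨⁅x, y⁆, hcomm x y⟩ = 1) := fun h => hx (hnd x h)
  push_neg at h1
  obtain ⟨y, hy⟩ := h1
  set c : ↥(Subgroup.center H) := ⟨⁅y, x⁆, hcomm y x⟩ with hc
  have hcinv : c = (⟨⁅x, y⁆, hcomm x y⟩ : ↥(Subgroup.center H))⁻¹ := by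
    apply Subtype.ext
    simp [hc, commutatorElement_inv]
  have hφc : (φ c : ℂ) ≠ 1 := by
    intro h
    apply hy
    have h' : φ c = 1 := Units.ext (by simpa using h)
    rw [hcinv, map_inv, inv_eq_one] at h'
    exact h'
  have hconj : y * x * y⁻¹ = (c : H) * x := by
    simp only [hc]
    group
  have h2 : trace ℂ V (ρ (y * x * y⁻¹)) = trace ℂ V (ρ x) := by
    rw [show y * x * y⁻¹ = y * (x * y⁻¹) by group, map_mul, trace_mul_comm, ← map_mul]
    congr 2
    group
  have h3 : ρ ((c : H) * x) = (φ c : ℂ) • ρ x := by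
    apply LinearMap.ext; intro v
    rw [map_mul, Module.End.mul_apply]
    simpa using hρc c (ρ x v)
  rw [hconj, h3, map_smul, smul_eq_mul] at h2
  by_contra h0
  exact hφc (mul_right_cancel₀ h0 (by rw [h2, one_mul]))

lemma SVN.sum_char (hcomm : ∀ x y : H, ⁅x, y⁆ ∈ Subgroup.center H)
    (φ : ↥(Subgroup.center H) →* ℂˣ)
    (hnd : ∀ x : H, (∀ y : H, φ ⟨⁅x, y⁆, hcomm x y⟩ = 1) → x ∈ Subgroup.center H)
    (ρ : Representation ℂ H V) (σ : Representation ℂ H W)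
    (hρc : ∀ (z : ↥(Subgroup.center H)) (v : V), ρ (z : H) v = (φ z : ℂ) • v)
    (hσc : ∀ (z : ↥(Subgroup.center H)) (w : W), σ (z : H) w = (φ z : ℂ) • w) :
    ∑ g : H, trace ℂ V (ρ g⁻¹) * trace ℂ W (σ g)
      = (Nat.card (Subgroup.center H) : ℂ) * (finrank ℂ V : ℂ) * (finrank ℂ W : ℂ) := by
  classical
  have hterm : ∀ g : H, trace ℂ V (ρ g⁻¹) * trace ℂ W (σ g)
      = if g ∈ Subgroup.center H then (finrank ℂ V : ℂ) * (finrank ℂ W : ℂ) else 0 := by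
    intro g
    by_cases hg : g ∈ Subgroup.center H
    · rw [if_pos hg]
      set z : ↥(Subgroup.center H) := ⟨g, hg⟩ with hz
      have h1 : trace ℂ V (ρ g⁻¹) = ((φ z)⁻¹ : ℂˣ) * (finrank ℂ V : ℂ) := by
        have := SVN.rho_central ρ φ hρc z⁻¹
        rw [map_inv] at this
        exact this
      have h2 : trace ℂ W (σ g) = (φ z : ℂ) * (finrank ℂ W : ℂ) :=
        SVN.rho_central σ φ hσc z
      rw [h1, h2]
      have huv : (((φ z)⁻¹ : ℂˣ) : ℂ) * ((φ z : ℂˣ) : ℂ) = 1 := by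
        rw [← Units.val_mul, inv_mul_cancel, Units.val_one]
      calc ((φ z)⁻¹ : ℂˣ) * (finrank ℂ V : ℂ) * ((φ z : ℂ) * (finrank ℂ W : ℂ))
          = ((((φ z)⁻¹ : ℂˣ) : ℂ) * ((φ z : ℂˣ) : ℂ))
              * ((finrank ℂ V : ℂ) * (finrank ℂ W : ℂ)) := by ring
        _ = (finrank ℂ V : ℂ) * (finrank ℂ W : ℂ) := by rw [huv, one_mul]
    · rw [if_neg hg, SVN.trace_vanish hcomm φ hnd σ hσc hg, mul_zero]
  have hcard : (Finset.filter (fun x => x ∈ Subgroup.center H) Finset.univ).card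
      = Nat.card ↥(Subgroup.center H) := by
    simp [Nat.card_eq_fintype_card, Fintype.card_subtype]
  rw [Finset.sum_congr rfl fun g _ => hterm g, Finset.sum_ite, Finset.sum_const,
    Finset.sum_const_zero, add_zero, nsmul_eq_mul, hcard]
  ring

end SVNsums

/-- Stone–von Neumann for finite Heisenberg `p`-groups: if `H` is a finite Heisenberg
`p`-group with center `Z` (i.e. commutators are central, `H/Z` is elementary abelian,
and the pairing `(x,y) ↦ φ([x,y])` is nondegenerate for the nontrivial central
character `φ`), then any irreducible complex representation with central character `φ`
has dimension `[H:Z]^{1/2}`, and any two such are isomorphic. -/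
theorem stone_von_neumann {p : ℕ} [Fact p.Prime] {H : Type*} [Group H] [Fintype H]
    (hp : IsPGroup p H)
    (hcomm : ∀ x y : H, ⁅x, y⁆ ∈ Subgroup.center H)
    (helem : ∀ x : H, x ^ p ∈ Subgroup.center H)
    (φ : ↥(Subgroup.center H) →* ℂˣ) (hφ : φ ≠ 1)
    (hnd : ∀ x : H, (∀ y : H, φ ⟨⁅x, y⁆, hcomm x y⟩ = 1) → x ∈ Subgroup.center H)
    {V W : Type*} [AddCommGroup V] [Module ℂ V] [AddCommGroup W] [Module ℂ W]
    [FiniteDimensional ℂ V] [FiniteDimensional ℂ W]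
    (ρ : Representation ℂ H V) (σ : Representation ℂ H W)
    (hρ : IrreducibleRep ρ) (hσ : IrreducibleRep σ)
    (hρc : ∀ (z : ↥(Subgroup.center H)) (v : V), ρ (z : H) v = (φ z : ℂ) • v)
    (hσc : ∀ (z : ↥(Subgroup.center H)) (w : W), σ (z : H) w = (φ z : ℂ) • w) :
    Module.finrank ℂ V ^ 2 = (Subgroup.center H).index ∧
      ∃ e : V ≃ₗ[ℂ] W, ∀ (h : H) (v : V), e (ρ h v) = σ h (e v) := by
  classical
  haveI hVnt := SVN.irr_nontrivial hρ
  haveI hWnt := SVN.irr_nontrivial hσ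
  have hz0 : Nat.card ↥(Subgroup.center H) ≠ 0 := Nat.card_pos.ne'
  have hV := SVN.card_mul_finrank_invariants ρ ρ
  rw [SVN.finrank_invariants_linHom_self hρ, SVN.sum_char hcomm φ hnd ρ ρ hρc hρc] at hV
  have hVn : Fintype.card H
      = Nat.card ↥(Subgroup.center H) * finrank ℂ V * finrank ℂ V := by
    have h : (Fintype.card H : ℂ)
        = ((Nat.card ↥(Subgroup.center H) * finrank ℂ V * finrank ℂ V : ℕ) : ℂ) := by
      push_cast
      rw [← hV]
      push_cast
      ring
    exact_mod_cast h
  have hW := SVN.card_mul_finrank_invariants σ σ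
  rw [SVN.finrank_invariants_linHom_self hσ, SVN.sum_char hcomm φ hnd σ σ hσc hσc] at hW
  have hWn : Fintype.card H
      = Nat.card ↥(Subgroup.center H) * finrank ℂ W * finrank ℂ W := by
    have h : (Fintype.card H : ℂ)
        = ((Nat.card ↥(Subgroup.center H) * finrank ℂ W * finrank ℂ W : ℕ) : ℂ) := by
      push_cast
      rw [← hW]
      push_cast
      ring
    exact_mod_cast h
  have hde : finrank ℂ V = finrank ℂ W := by
    have h1 : Nat.card ↥(Subgroup.center H) * (finrank ℂ V * finrank ℂ V)
        = Nat.card ↥(Subgroup.center H) * (finrank ℂ W * finrank ℂ W) := by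
      rw [← mul_assoc, ← mul_assoc, ← hVn, ← hWn]
    have h2 := Nat.eq_of_mul_eq_mul_left (Nat.pos_of_ne_zero hz0) h1
    exact Nat.mul_self_inj.mp h2
  have hindex : finrank ℂ V ^ 2 = (Subgroup.center H).index := by
    have hmul := Subgroup.card_mul_index (Subgroup.center H)
    have hthis : Nat.card ↥(Subgroup.center H) * (Subgroup.center H).index
        = Nat.card ↥(Subgroup.center H) * (finrank ℂ V * finrank ℂ V) := by
      rw [hmul, Nat.card_eq_fintype_card (α := H), hVn, mul_assoc]
    have h2 := Nat.eq_of_mul_eq_mul_left (Nat.pos_of_ne_zero hz0) hthis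
    rw [h2, sq]
  refine ⟨hindex, ?_⟩
  have hX := SVN.card_mul_finrank_invariants ρ σ
  rw [SVN.sum_char hcomm φ hnd ρ σ hρc hσc] at hX
  have hcardC : (Fintype.card H : ℂ) ≠ 0 := Nat.cast_ne_zero.mpr Fintype.card_ne_zero
  have hXn : Nat.card ↥(Subgroup.center H) * finrank ℂ V * finrank ℂ W = Fintype.card H := by
    rw [← hde, ← hVn]
  have hXr : (Fintype.card H : ℂ) * (finrank ℂ (Representation.linHom ρ σ).invariants : ℂ)
      = (Fintype.card H : ℂ) * 1 := by
    rw [hX, mul_one]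
    exact_mod_cast congrArg (fun n : ℕ => (n : ℂ)) hXn
  have hfr : finrank ℂ (Representation.linHom ρ σ).invariants = 1 := by
    have h := mul_left_cancel₀ hcardC hXr
    exact_mod_cast h
  have hne : (Representation.linHom ρ σ).invariants ≠ ⊥ := by
    intro hb
    rw [hb, finrank_bot] at hfr
    exact one_ne_zero hfr.symm
  obtain ⟨f, hfmem, hf0⟩ := Submodule.exists_mem_ne_zero_of_ne_bot hne
  have hint := SVN.mem_invariants_linHom hfmem
  have hbij := SVN.schur_bij hρ hσ hint hf0
  exact ⟨LinearEquiv.ofBijective f hbij, fun h v => hint h v⟩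
end
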